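/- Let M = ℝ₊ with the usual metric, φ(x) = 1/(x+1) for x ∈ M, and T(x) = [x + φ(x), ∞) for x ∈ M. Then φ is lower semi-continuous, each T(x) is a nonempty closed subset of M, for every x ∈ M one has dist(x, T(x)) ≤ φ(x) − inf φ(T(x)), and yet T has no fixed point, i.e., there is no x ∈ M with x ∈ T(x). (This answers Penot's problem in the negative.) -/

import Mathlib

open scoped NNReal

/-- Negative answer to Penot's problem: on `M = ℝ₊`, the function `φ x = 1/(x+1)`
is lower semi-continuous, the set-valued map `T x = [x + φ x, ∞)` has nonempty
closed values and satisfies `dist(x, T x) ≤ φ x - inf φ(T x)` for all `x`,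
yet `T` has no fixed point. -/
theorem penot_problem_negative_answer
    (φ : ℝ≥0 → ℝ) (hφdef : ∀ x, φ x = 1 / ((x : ℝ) + 1))
    (T : ℝ≥0 → Set ℝ≥0) (hTdef : ∀ x, T x = {y : ℝ≥0 | (x : ℝ) + φ x ≤ (y : ℝ)}) :
    LowerSemicontinuous φ ∧
    (∀ x, (T x).Nonempty ∧ IsClosed (T x)) ∧
    (∀ x, Metric.infDist x (T x) ≤ φ x - sInf (φ '' T x)) ∧
    ¬∃ x, x ∈ T x := by
  have hφpos : ∀ x : ℝ≥0, 0 < φ x := by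
    intro x
    rw [hφdef]
    positivity
  have hφcont : Continuous φ := by
    have : φ = fun x : ℝ≥0 => 1 / ((x : ℝ) + 1) := funext hφdef
    rw [this]
    apply Continuous.div continuous_const (by continuity)
    intro x
    positivity
  -- the point x + φ x lies in T x
  have hy0 : ∀ x : ℝ≥0, (⟨(x : ℝ) + φ x, add_nonneg x.coe_nonneg (hφpos x).le⟩ : ℝ≥0) ∈ T x := by
    intro x
    rw [hTdef]
    show (x : ℝ) + φ x ≤ ((⟨(x : ℝ) + φ x, add_nonneg x.coe_nonneg (hφpos x).le⟩ : ℝ≥0) : ℝ)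
    exact le_rfl
  refine ⟨hφcont.lowerSemicontinuous, fun x => ⟨⟨_, hy0 x⟩, ?_⟩, ?_, ?_⟩
  · rw [hTdef]
    exact isClosed_Ici.preimage NNReal.continuous_coe
  · intro x
    set y0 : ℝ≥0 := ⟨(x : ℝ) + φ x, add_nonneg x.coe_nonneg (hφpos x).le⟩ with hy0def
    have hbdd : BddBelow (φ '' T x) := by
      refine ⟨0, fun v hv => ?_⟩
      obtain ⟨y, _, rfl⟩ := hv
      exact (hφpos y).le
    have hne : (φ '' T x).Nonempty := ⟨φ y0, Set.mem_image_of_mem φ (hy0 x)⟩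
    have hsinf : sInf (φ '' T x) ≤ 0 := by
      rw [Real.sInf_le_iff hbdd hne]
      intro ε hε
      set z : ℝ≥0 := (max ((x : ℝ) + φ x) (1 / ε)).toNNReal with hz
      have hzc : (z : ℝ) = max ((x : ℝ) + φ x) (1 / ε) := by
        rw [hz, Real.coe_toNNReal]
        exact le_max_of_le_left (add_nonneg x.coe_nonneg (hφpos x).le)
      have hzT : z ∈ T x := by
        rw [hTdef]
        simp only [Set.mem_setOf_eq, hzc]
        exact le_max_left _ _
      refine ⟨φ z, Set.mem_image_of_mem φ hzT, ?_⟩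
      rw [hφdef, zero_add, hzc]
      have h1 : 1 / ε < max ((x : ℝ) + φ x) (1 / ε) + 1 :=
        lt_of_le_of_lt (le_max_right _ _) (lt_add_one _)
      rw [div_lt_iff₀ (by positivity)]
      calc (1 : ℝ) = ε * (1 / ε) := by field_simp
        _ < ε * (max ((x : ℝ) + φ x) (1 / ε) + 1) := by
            exact mul_lt_mul_of_pos_left h1 hε
    have hdist : Metric.infDist x (T x) ≤ φ x := by
      have := Metric.infDist_le_dist_of_mem (x := x) (hy0 x)
      erw [NNReal.dist_eq] at this
      change _ ≤ |(x : ℝ) - ((x : ℝ) + φ x)| at this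
      rwa [abs_sub_comm, add_sub_cancel_left, abs_of_pos (hφpos x)] at this
    linarith
  · rintro ⟨x, hx⟩
    rw [hTdef] at hx
    have : (x : ℝ) + φ x ≤ (x : ℝ) := hx
    linarith [hφpos x]
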